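/- arXiv:2605.10091 — 2 statements merged into one kernel-verified Lean document; each statement's English description precedes it below -/
import Mathlib

section
/- Fix a function φ : ℝ → ℝ, levels 0,…,L with cell counts n₀,…,n_L and feature dimensions d₀,…,d_L, incidence matrices B_i ∈ Matrix (Fin n_i) (Fin n_{i+1}) ℝ for i = 0,…,L−1, and weight matrices W↑_i ∈ Matrix (Fin d_i) (Fin d_{i+1}) ℝ, W↓_i ∈ Matrix (Fin d_{i+1}) (Fin d_i) ℝ, W_b ∈ Matrix (Fin d_L) (Fin d_L) ℝ, W^m_i ∈ Matrix (Fin d_i) (Fin d_i) ℝ. Define the canonical TopoU-Net on input H ∈ Matrix (Fin n₀) (Fin d₀) ℝ by E_0 = H, E_{i+1} = φ[B_iᵀ * E_i * W↑_i], D_L = φ[E_L * W_b], D̃_i = φ[B_i * D_{i+1} * W↓_i], and D_i = φ[(E_i + D̃_i) * W^m_i] for i = L−1,…,0. Fix permutations σ_i of Fin n_i for each level. Then the network obtained by replacing the input H with P_{σ_0} * H and each incidence matrix B_i with P_{σ_i} * B_i * P_{σ_{i+1}}ᵀ (consistent reindexing of cells) produces, at every level i, encoder state P_{σ_i} * E_i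 and decoder state P_{σ_i} * D_i; in particular its output equals P_{σ_0} * D_0. -/
open Matrix

/-- The `n × n` permutation matrix of a permutation `σ` of `Fin n`:
left multiplication by `permMat σ` permutes rows according to `σ`. -/
noncomputable def permMat {n : ℕ} (σ : Equiv.Perm (Fin n)) : Matrix (Fin n) (Fin n) ℝ :=
  fun i j => if σ j = i then 1 else 0


lemma permMat_mul_apply {n m : ℕ} (σ : Equiv.Perm (Fin n))
    (M : Matrix (Fin n) (Fin m) ℝ) (i : Fin n) (j : Fin m) :
    (permMat σ * M) i j = M (σ.symm i) j := by
  simp only [permMat, Matrix.mul_apply, ite_mul, one_mul, zero_mul]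
  rw [Finset.sum_eq_single (σ.symm i)]
  · simp
  · intro b _ hb
    rw [if_neg]
    intro h
    exact hb (by simpa using congrArg σ.symm h)
  · simp

lemma permMat_map {n m : ℕ} (φ : ℝ → ℝ) (σ : Equiv.Perm (Fin n))
    (M : Matrix (Fin n) (Fin m) ℝ) :
    (permMat σ * M).map φ = permMat σ * M.map φ := by
  ext i j
  simp [Matrix.map_apply, permMat_mul_apply]

lemma permMat_T_mul {n : ℕ} (σ : Equiv.Perm (Fin n)) :
    (permMat σ)ᵀ * permMat σ = 1 := by
  ext i j
  simp only [Matrix.mul_apply, Matrix.transpose_apply, permMat, ite_mul, one_mul, zero_mul]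
  rw [Finset.sum_eq_single (σ i)]
  · simp [Matrix.one_apply, eq_comm, σ.injective.eq_iff]
  · intro b _ hb
    rw [if_neg (fun h => hb h.symm)]
  · simp

lemma helper_up {a b c e : ℕ} (σ : Equiv.Perm (Fin a)) (τ : Equiv.Perm (Fin b))
    (M : Matrix (Fin a) (Fin b) ℝ) (X : Matrix (Fin a) (Fin c) ℝ)
    (W : Matrix (Fin c) (Fin e) ℝ) :
    (permMat σ * M * (permMat τ)ᵀ)ᵀ * (permMat σ * X) * W = permMat τ * (Mᵀ * X * W) := by
  rw [Matrix.transpose_mul, Matrix.transpose_mul, Matrix.transpose_transpose]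
  simp only [Matrix.mul_assoc]
  rw [← Matrix.mul_assoc (permMat σ)ᵀ (permMat σ), permMat_T_mul, Matrix.one_mul]

lemma helper_down {a b c e : ℕ} (σ : Equiv.Perm (Fin a)) (τ : Equiv.Perm (Fin b))
    (M : Matrix (Fin a) (Fin b) ℝ) (Y : Matrix (Fin b) (Fin c) ℝ)
    (W : Matrix (Fin c) (Fin e) ℝ) :
    permMat σ * M * (permMat τ)ᵀ * (permMat τ * Y) * W = permMat σ * (M * Y * W) := by
  simp only [Matrix.mul_assoc]
  rw [← Matrix.mul_assoc (permMat τ)ᵀ (permMat τ), permMat_T_mul, Matrix.one_mul]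

/-- The canonical TopoU-Net (incidence convolution with
pointwise nonlinearity `φ`, pointwise bottleneck map, additive skip merges) is
equivariant under consistent reindexing of cells: replacing the input `H` by
`permMat (σ 0) * H` and each incidence matrix `B i` by
`permMat (σ i) * B i * (permMat (σ (i+1)))ᵀ` produces, at every level `i`,
encoder state `permMat (σ i) * E i` and decoder state `permMat (σ i) * D i`;
in particular the output equals `permMat (σ 0) * D 0`. -/
theorem canonical_topoUNet_equivariance (φ : ℝ → ℝ) (L : ℕ) (n d : ℕ → ℕ)
    (B : ∀ i : ℕ, Matrix (Fin (n i)) (Fin (n (i + 1))) ℝ)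
    (Wup : ∀ i : ℕ, Matrix (Fin (d i)) (Fin (d (i + 1))) ℝ)
    (Wdown : ∀ i : ℕ, Matrix (Fin (d (i + 1))) (Fin (d i)) ℝ)
    (Wb : Matrix (Fin (d L)) (Fin (d L)) ℝ)
    (Wm : ∀ i : ℕ, Matrix (Fin (d i)) (Fin (d i)) ℝ)
    (σ : ∀ i : ℕ, Equiv.Perm (Fin (n i)))
    (H : Matrix (Fin (n 0)) (Fin (d 0)) ℝ)
    -- the run of the canonical network with incidence matrices B i on input H
    (E D : ∀ i : ℕ, Matrix (Fin (n i)) (Fin (d i)) ℝ)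
    (hE0 : E 0 = H)
    (hE : ∀ i, i < L → E (i + 1) = ((B i)ᵀ * E i * Wup i).map φ)
    (hDL : D L = (E L * Wb).map φ)
    (hD : ∀ i, i < L →
      D i = ((E i + (B i * D (i + 1) * Wdown i).map φ) * Wm i).map φ)
    -- the run with reindexed input and reindexed incidence matrices
    (E' D' : ∀ i : ℕ, Matrix (Fin (n i)) (Fin (d i)) ℝ)
    (hE0' : E' 0 = permMat (σ 0) * H)
    (hE' : ∀ i, i < L → E' (i + 1) =
      ((permMat (σ i) * B i * (permMat (σ (i + 1)))ᵀ)ᵀ * E' i * Wup i).map φ)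
    (hDL' : D' L = (E' L * Wb).map φ)
    (hD' : ∀ i, i < L → D' i =
      ((E' i + ((permMat (σ i) * B i * (permMat (σ (i + 1)))ᵀ) * D' (i + 1) * Wdown i).map φ)
        * Wm i).map φ) :
    (∀ i, i ≤ L → E' i = permMat (σ i) * E i) ∧
    (∀ i, i ≤ L → D' i = permMat (σ i) * D i) ∧
    D' 0 = permMat (σ 0) * D 0 := by
  have hEeq : ∀ i, i ≤ L → E' i = permMat (σ i) * E i := by
    intro i
    induction i with
    | zero => intro _; rw [hE0', hE0]
    | succ k ih =>
      intro h
      have hk : k < L := h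
      rw [hE' k hk, hE k hk, ih (le_of_lt hk), ← permMat_map, helper_up]
  have key : ∀ k, k ≤ L → D' (L - k) = permMat (σ (L - k)) * D (L - k) := by
    intro k
    induction k with
    | zero =>
      intro _
      simp only [Nat.sub_zero]
      rw [hDL', hDL, hEeq L le_rfl, Matrix.mul_assoc, permMat_map]
    | succ k ih =>
      intro hk
      have h1 : L - (k + 1) < L := by omega
      have h2 : L - k = (L - (k + 1)) + 1 := by omega
      have ihk := ih (by omega)
      rw [h2] at ihk
      rw [hD' _ h1, hD _ h1, ihk, hEeq _ (le_of_lt h1), helper_down, permMat_map,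
        ← Matrix.mul_add, Matrix.mul_assoc, permMat_map]
  have hDeq : ∀ i, i ≤ L → D' i = permMat (σ i) * D i := by
    intro i hi
    have : L - (L - i) = i := by omega
    have := key (L - i) (by omega)
    rwa [‹L - (L - i) = i›] at this
  exact ⟨hEeq, hDeq, hDeq 0 (Nat.zero_le L)⟩
end

section
/- Let n, m, d, d' be positive integers, let B ∈ Matrix (Fin n) (Fin m) ℝ be an incidence matrix, H ∈ Matrix (Fin n) (Fin d) ℝ a cochain on the lower-rank cells, W ∈ Matrix (Fin d) (Fin d') ℝ a shared weight matrix, and φ : ℝ → ℝ. Then for all permutations σ of Fin n and τ of Fin m, the upward incidence-convolution transport T↑(B, H) = φ[Bᵀ * H * W] is reindexing-equivariant: φ[(P_σ * B * P_τᵀ)ᵀ * (P_σ * H) * W] = P_τ * φ[Bᵀ * H * W]. -/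
open Matrix

lemma permMat_eq {n : ℕ} (σ : Equiv.Perm (Fin n)) :
    permMat σ = (σ⁻¹ : Equiv.Perm (Fin n)).toPEquiv.toMatrix := by
  ext i j
  have hiff : (σ j = i) = (σ⁻¹ i = j) := by
    apply propext
    constructor
    · rintro rfl; simp
    · rintro rfl; simp
  simp [permMat, PEquiv.toMatrix, Equiv.toPEquiv_apply, hiff]

lemma permMat_mul {n m : ℕ} (σ : Equiv.Perm (Fin n)) (M : Matrix (Fin n) (Fin m) ℝ) :
    permMat σ * M = M.submatrix σ.symm id := by
  rw [permMat_eq, PEquiv.toMatrix_toPEquiv_mul]; rfl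

lemma mul_permMat_t {n m : ℕ} (τ : Equiv.Perm (Fin m)) (M : Matrix (Fin n) (Fin m) ℝ) :
    M * (permMat τ)ᵀ = M.submatrix id τ.symm := by
  have h : (permMat τ)ᵀ = (τ : Equiv.Perm (Fin m)).toPEquiv.toMatrix := by
    ext i j
    simp [permMat, PEquiv.toMatrix, Equiv.toPEquiv_apply, Matrix.transpose_apply]
  rw [h, PEquiv.mul_toMatrix_toPEquiv]

/-- The upward incidence-convolution transport
`T↑(B, H) = φ[Bᵀ * H * W]` is reindexing-equivariant: under a simultaneous
reindexing of lower-rank cells by `σ` and higher-rank cells by `τ`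
(`B ↦ P_σ * B * P_τᵀ`, `H ↦ P_σ * H`),
`φ[(P_σ * B * P_τᵀ)ᵀ * (P_σ * H) * W] = P_τ * φ[Bᵀ * H * W]`. -/
theorem upward_incidence_convolution_equivariant (n m d d' : ℕ)
    (hn : 0 < n) (hm : 0 < m) (hd : 0 < d) (hd' : 0 < d')
    (B : Matrix (Fin n) (Fin m) ℝ)
    (H : Matrix (Fin n) (Fin d) ℝ)
    (W : Matrix (Fin d) (Fin d') ℝ)
    (φ : ℝ → ℝ)
    (σ : Equiv.Perm (Fin n)) (τ : Equiv.Perm (Fin m)) :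
    ((permMat σ * B * (permMat τ)ᵀ)ᵀ * (permMat σ * H) * W).map φ
      = permMat τ * ((Bᵀ * H * W).map φ) := by
  rw [permMat_mul σ B, mul_permMat_t, permMat_mul σ H, permMat_mul τ]
  ext i j
  simp only [Matrix.map_apply, Matrix.mul_apply, Matrix.submatrix_apply,
    Matrix.transpose_apply, id]
  congr 1
  apply Finset.sum_congr rfl
  intro k _
  congr 1
  exact Equiv.sum_comp σ.symm (fun a => B a (τ.symm i) * H a k)
end
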